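/- Let r > 0, v ∈ ℝ^n with r = ‖v‖_1, and p ∈ [1,∞]. Then x* minimizes r‖x‖_∞ − ⟨x, v⟩ over {‖x‖_p = 1} if and only if ‖x*‖_p = 1 and x*_i/‖x*‖_∞ ∈ Sgn(v_i) for every i. -/
import Mathlib


open Finset
open scoped ENNReal

noncomputable def pnorm {n : ℕ} (p : ℝ≥0∞) (x : Fin n → ℝ) : ℝ :=
  if p = ⊤ then ‖x‖ else (∑ i, |x i| ^ p.toReal) ^ (1 / p.toReal)

noncomputable def SgnSet (t : ℝ) : Set ℝ :=
  if 0 < t then {1} else if t < 0 then {-1} else Set.Icc (-1) 1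

lemma key_nonneg {n : ℕ} (r : ℝ) (v : Fin n → ℝ) (hrv : r = ∑ i, |v i|)
    (y : Fin n → ℝ) : ∑ i, y i * v i ≤ r * ‖y‖ := by
  calc ∑ i, y i * v i ≤ ∑ i, ‖y‖ * |v i| := by
        apply Finset.sum_le_sum
        intro i _
        calc y i * v i ≤ |y i * v i| := le_abs_self _
          _ = |y i| * |v i| := abs_mul _ _
          _ ≤ ‖y‖ * |v i| := by
              apply mul_le_mul_of_nonneg_right _ (abs_nonneg _)
              simpa [Real.norm_eq_abs] using norm_le_pi_norm y i
    _ = r * ‖y‖ := by rw [← Finset.mul_sum, ← hrv]; ring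

lemma toReal_pos_of_ne_top {p : ℝ≥0∞} (hp : 1 ≤ p) (hT : p ≠ ⊤) : 0 < p.toReal :=
  ENNReal.toReal_pos (one_pos.trans_le hp).ne' hT

lemma pnorm_smul {n : ℕ} (p : ℝ≥0∞) (hp : 1 ≤ p) (c : ℝ) (hc : 0 ≤ c)
    (z : Fin n → ℝ) : pnorm p (c • z) = c * pnorm p z := by
  unfold pnorm
  split_ifs with h
  · rw [norm_smul, Real.norm_eq_abs, abs_of_nonneg hc]
  · have ht : 0 < p.toReal := toReal_pos_of_ne_top hp h
    have heach : ∀ i, |(c • z) i| ^ p.toReal = c ^ p.toReal * |z i| ^ p.toReal := by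
      intro i
      rw [Pi.smul_apply, smul_eq_mul, abs_mul, Real.mul_rpow (abs_nonneg _) (abs_nonneg _),
        abs_of_nonneg hc]
    rw [Finset.sum_congr rfl (fun i _ => heach i), ← Finset.mul_sum,
      Real.mul_rpow (by positivity) (by positivity), ← Real.rpow_mul hc,
      mul_one_div_cancel ht.ne', Real.rpow_one]

lemma pnorm_pos {n : ℕ} (p : ℝ≥0∞) (hp : 1 ≤ p) (z : Fin n → ℝ) (hz : z ≠ 0) :
    0 < pnorm p z := by
  unfold pnorm
  split_ifs with hT
  · exact norm_pos_iff.mpr hz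
  · have ht : 0 < p.toReal := toReal_pos_of_ne_top hp hT
    obtain ⟨i, hi⟩ : ∃ i, z i ≠ 0 := Function.ne_iff.mp hz
    have hsum : 0 < ∑ j, |z j| ^ p.toReal := by
      apply Finset.sum_pos' (fun j _ => by positivity)
      exact ⟨i, Finset.mem_univ i, by positivity⟩
    positivity

lemma norm_pos_of_pnorm_one {n : ℕ} (p : ℝ≥0∞) (hp : 1 ≤ p) (xs : Fin n → ℝ)
    (h : pnorm p xs = 1) : 0 < ‖xs‖ := by
  rcases eq_or_ne xs 0 with h0 | h0
  · exfalso
    subst h0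
    unfold pnorm at h
    split_ifs at h with hT
    · simp at h
    · have ht : 0 < p.toReal := toReal_pos_of_ne_top hp hT
      rw [Finset.sum_congr rfl (fun i _ => by
        show |(0 : Fin n → ℝ) i| ^ p.toReal = 0
        simp [Real.zero_rpow ht.ne']), Finset.sum_const, smul_zero,
        Real.zero_rpow (by positivity : 1 / p.toReal ≠ 0)] at h
      exact zero_ne_one h
  · exact norm_pos_iff.mpr h0

/-- If `r = ‖v‖₁ > 0`, then `x*` minimizes `r‖x‖_∞ − ⟨x,v⟩` over the unit `p`-sphere
iff `‖x*‖_p = 1` and `x*_i/‖x*‖_∞ ∈ Sgn(v_i)` for every `i`. -/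
theorem stmt10 {n : ℕ} (p : ℝ≥0∞) (hp : 1 ≤ p)
    (r : ℝ) (hr : 0 < r) (v : Fin n → ℝ) (hrv : r = ∑ i, |v i|)
    (xs : Fin n → ℝ) :
    (pnorm p xs = 1 ∧ ∀ y : Fin n → ℝ, pnorm p y = 1 →
        r * ‖xs‖ - ∑ i, xs i * v i ≤ r * ‖y‖ - ∑ i, y i * v i)
      ↔ (pnorm p xs = 1 ∧ ∀ i, xs i / ‖xs‖ ∈ SgnSet (v i)) := by
  have hne : Nonempty (Fin n) := by
    by_contra h
    rw [not_nonempty_iff] at h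
    rw [hrv, Finset.univ_eq_empty, Finset.sum_empty] at hr
    exact lt_irrefl 0 hr
  obtain ⟨i0⟩ := hne
  -- the sign vector
  set z : Fin n → ℝ := fun i => if 0 ≤ v i then 1 else -1 with hz_def
  have hz_abs : ∀ i, |z i| = 1 := by
    intro i; simp only [hz_def]; split_ifs <;> norm_num
  have hz_ne : z ≠ 0 := by
    intro h
    have := hz_abs i0
    rw [h] at this; simp at this
  have hznorm : ‖z‖ = 1 := by
    apply le_antisymm
    · apply (pi_norm_le_iff_of_nonneg zero_le_one).mpr
      intro i; rw [Real.norm_eq_abs, hz_abs i]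
    · calc (1 : ℝ) = |z i0| := (hz_abs i0).symm
        _ = ‖z i0‖ := (Real.norm_eq_abs _).symm
        _ ≤ ‖z‖ := norm_le_pi_norm z i0
  have hzv : ∑ i, z i * v i = r := by
    rw [hrv]
    apply Finset.sum_congr rfl
    intro i _
    simp only [hz_def]
    split_ifs with h
    · rw [abs_of_nonneg h]; ring
    · rw [abs_of_neg (not_le.mp h)]; ring
  constructor
  · rintro ⟨h1, hmin⟩
    have hxs_pos : 0 < ‖xs‖ := norm_pos_of_pnorm_one p hp xs h1
    -- build competitor y
    have hc : 0 < pnorm p z := pnorm_pos p hp z hz_ne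
    set c := pnorm p z with hc_def
    set y : Fin n → ℝ := c⁻¹ • z with hy_def
    have hy1 : pnorm p y = 1 := by
      rw [hy_def, pnorm_smul p hp _ (by positivity) z, ← hc_def]
      field_simp
    have hfy : r * ‖y‖ - ∑ i, y i * v i = 0 := by
      have hny : ‖y‖ = c⁻¹ := by
        rw [hy_def, norm_smul, Real.norm_eq_abs, abs_of_nonneg (by positivity), hznorm, mul_one]
      have hsy : ∑ i, y i * v i = c⁻¹ * r := by
        rw [hy_def]
        simp only [Pi.smul_apply, smul_eq_mul, mul_assoc]
        rw [← Finset.mul_sum, hzv]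
      rw [hny, hsy]; ring
    have hle0 : r * ‖xs‖ - ∑ i, xs i * v i ≤ 0 := by
      have := hmin y hy1
      linarith
    have hge0 : 0 ≤ r * ‖xs‖ - ∑ i, xs i * v i := by
      have := key_nonneg r v hrv xs
      linarith
    have heqsum : ∑ i, xs i * v i = ∑ i, ‖xs‖ * |v i| := by
      have h2 : ∑ i, ‖xs‖ * |v i| = r * ‖xs‖ := by
        rw [← Finset.mul_sum, ← hrv]; ring
      rw [h2]; linarith
    have hle : ∀ i ∈ Finset.univ, xs i * v i ≤ ‖xs‖ * |v i| := by
      intro i _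
      calc xs i * v i ≤ |xs i * v i| := le_abs_self _
        _ = |xs i| * |v i| := abs_mul _ _
        _ ≤ ‖xs‖ * |v i| := by
            apply mul_le_mul_of_nonneg_right _ (abs_nonneg _)
            simpa [Real.norm_eq_abs] using norm_le_pi_norm xs i
    have hterm : ∀ i, xs i * v i = ‖xs‖ * |v i| := fun i =>
      (Finset.sum_eq_sum_iff_of_le hle).mp heqsum i (Finset.mem_univ i)
    refine ⟨h1, fun i => ?_⟩
    have habs : |xs i| ≤ ‖xs‖ := by
      simpa [Real.norm_eq_abs] using norm_le_pi_norm xs i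
    unfold SgnSet
    split_ifs with hv1 hv2
    · have := hterm i
      rw [abs_of_pos hv1] at this
      have hxi : xs i = ‖xs‖ := mul_right_cancel₀ hv1.ne' this
      rw [hxi, div_self hxs_pos.ne']
      rfl
    · have := hterm i
      rw [abs_of_neg hv2] at this
      have hxi : xs i = -‖xs‖ := by
        have := mul_right_cancel₀ hv2.ne (by linarith [this] : xs i * v i = -‖xs‖ * v i)
        linarith [this]
      rw [hxi, neg_div, div_self hxs_pos.ne']
      rfl
    · constructor
      · rw [le_div_iff₀ hxs_pos]
        have := abs_le.mp habs
        linarith [this.1]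
      · rw [div_le_one hxs_pos]
        exact (abs_le.mp habs).2
  · rintro ⟨h1, hsgn⟩
    have hxs_pos : 0 < ‖xs‖ := norm_pos_of_pnorm_one p hp xs h1
    refine ⟨h1, fun y hy => ?_⟩
    have hterm : ∀ i, xs i * v i = ‖xs‖ * |v i| := by
      intro i
      have hs := hsgn i
      unfold SgnSet at hs
      split_ifs at hs with hv1 hv2
      · have : xs i / ‖xs‖ = 1 := hs
        have hxi : xs i = ‖xs‖ := by field_simp at this; linarith [this]
        rw [hxi, abs_of_pos hv1]
      · have : xs i / ‖xs‖ = -1 := hs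
        have hxi : xs i = -‖xs‖ := by field_simp at this; linarith [this]
        rw [hxi, abs_of_neg hv2]; ring
      · have hv0 : v i = 0 := le_antisymm (not_lt.mp hv1) (not_lt.mp hv2)
        rw [hv0]; simp
    have hfxs : r * ‖xs‖ - ∑ i, xs i * v i = 0 := by
      rw [Finset.sum_congr rfl (fun i _ => hterm i), ← Finset.mul_sum, ← hrv]
      ring
    have := key_nonneg r v hrv y
    linarith
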